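/- Let L⋆, L be symmetric p×p real matrices and σ > 0. Suppose every nonzero singular value of L⋆ is at least σ, rank(L) ≤ rank(L⋆), and 8·‖L − L⋆‖₂ ≤ σ, where ‖·‖₂ is the spectral norm. Then rank(L) = rank(L⋆), and L has the same inertia as L⋆: the number of positive eigenvalues (counted with multiplicity) of L equals that of L⋆, and likewise for negative eigenvalues. -/
import Mathlib


open Matrix Finset
open scoped RealInnerProductSpace

noncomputable section

/-- Spectral norm (largest singular value / ℓ2→ℓ2 operator norm) of a real matrix. -/
def sNorm {m n : Type*} [Fintype m] [Fintype n] [DecidableEq m] [DecidableEq n]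
    (M : Matrix m n ℝ) : ℝ :=
  ‖(Matrix.toEuclideanLin M).toContinuousLinearMap‖

variable {p : ℕ}

lemma toEuclideanLin_eigenvectorBasis (A : Matrix (Fin p) (Fin p) ℝ) (hA : A.IsHermitian)
    (i : Fin p) :
    Matrix.toEuclideanLin A (hA.eigenvectorBasis i) =
      hA.eigenvalues i • hA.eigenvectorBasis i := by
  ext j
  rw [toEuclideanLin_apply]
  simpa using congrFun (hA.mulVec_eigenvectorBasis i) j

lemma quad_eq (A : Matrix (Fin p) (Fin p) ℝ) (hA : A.IsHermitian)
    (x : EuclideanSpace ℝ (Fin p)) :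
    ⟪x, Matrix.toEuclideanLin A x⟫ =
      ∑ i, hA.eigenvalues i * ⟪x, hA.eigenvectorBasis i⟫ ^ 2 := by
  have hsym := (Matrix.isHermitian_iff_isSymmetric.mp hA)
  rw [← (hA.eigenvectorBasis).sum_inner_mul_inner x (Matrix.toEuclideanLin A x)]
  refine Finset.sum_congr rfl fun i _ => ?_
  have h1 : ⟪hA.eigenvectorBasis i, Matrix.toEuclideanLin A x⟫ =
      hA.eigenvalues i * ⟪hA.eigenvectorBasis i, x⟫ := by
    rw [← hsym (hA.eigenvectorBasis i) x, toEuclideanLin_eigenvectorBasis,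
      real_inner_smul_left]
  rw [h1, real_inner_comm (hA.eigenvectorBasis i) x]
  ring

lemma norm_sq_eq (b : OrthonormalBasis (Fin p) ℝ (EuclideanSpace ℝ (Fin p)))
    (x : EuclideanSpace ℝ (Fin p)) :
    ‖x‖ ^ 2 = ∑ i, ⟪x, b i⟫ ^ 2 := by
  rw [← real_inner_self_eq_norm_sq, ← b.sum_inner_mul_inner x x]
  refine Finset.sum_congr rfl fun i _ => ?_
  rw [real_inner_comm (b i) x]; ring

lemma inner_span_zero (b : OrthonormalBasis (Fin p) ℝ (EuclideanSpace ℝ (Fin p)))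
    (S : Finset (Fin p)) (x : EuclideanSpace ℝ (Fin p))
    (hx : x ∈ Submodule.span ℝ (b '' (S : Set (Fin p)))) {i : Fin p} (hi : i ∉ S) :
    ⟪x, b i⟫ = 0 := by
  induction hx using Submodule.span_induction with
  | mem y hy =>
      obtain ⟨j, hj, rfl⟩ := hy
      have hne : j ≠ i := fun h => hi (h ▸ hj)
      exact b.orthonormal.2 hne
  | zero => simp
  | add y z _ _ hy hz => rw [inner_add_left, hy, hz]; ring
  | smul c y _ hy => rw [real_inner_smul_left, hy]; ring

lemma finrank_span_basis (b : OrthonormalBasis (Fin p) ℝ (EuclideanSpace ℝ (Fin p)))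
    (S : Finset (Fin p)) :
    Module.finrank ℝ (Submodule.span ℝ (b '' (S : Set (Fin p)))) = S.card := by
  have h : b '' (S : Set (Fin p)) = Set.range (⇑b ∘ (Subtype.val : S → Fin p)) := by
    ext y; simp [Set.mem_image, Function.comp]
  rw [h, finrank_span_eq_card
    (b.orthonormal.linearIndependent.comp Subtype.val Subtype.val_injective),
    Fintype.card_coe]

lemma abs_inner_le (M : Matrix (Fin p) (Fin p) ℝ) (x : EuclideanSpace ℝ (Fin p)) :
    |⟪x, Matrix.toEuclideanLin M x⟫| ≤
      ‖(Matrix.toEuclideanLin M).toContinuousLinearMap‖ * ‖x‖ ^ 2 := by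
  calc |⟪x, Matrix.toEuclideanLin M x⟫| ≤ ‖x‖ * ‖Matrix.toEuclideanLin M x‖ :=
        abs_real_inner_le_norm _ _
    _ ≤ ‖x‖ * (‖(Matrix.toEuclideanLin M).toContinuousLinearMap‖ * ‖x‖) := by
        refine mul_le_mul_of_nonneg_left ?_ (norm_nonneg _)
        have := (Matrix.toEuclideanLin M).toContinuousLinearMap.le_opNorm x
        rwa [LinearMap.coe_toContinuousLinearMap'] at this
    _ = ‖(Matrix.toEuclideanLin M).toContinuousLinearMap‖ * ‖x‖ ^ 2 := by ring

lemma core_pos (A B : Matrix (Fin p) (Fin p) ℝ) (hA : A.IsHermitian) (hB : B.IsHermitian)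
    (σ : ℝ) (hσ : 0 < σ) (hclose : 8 * sNorm (B - A) ≤ σ)
    (SA SB : Finset (Fin p))
    (hSA : ∀ i ∈ SA, σ ≤ hA.eigenvalues i)
    (hSB : ∀ i ∉ SB, hB.eigenvalues i ≤ 0) :
    SA.card ≤ SB.card := by
  set V := Submodule.span ℝ (hA.eigenvectorBasis '' (SA : Set (Fin p)))
  set W := Submodule.span ℝ (hB.eigenvectorBasis '' ((SBᶜ : Finset (Fin p)) : Set (Fin p)))
  have hdisj : Disjoint V W := by
    rw [Submodule.disjoint_def]
    intro x hxV hxW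
    by_contra hx0
    have hxpos : 0 < ‖x‖ := norm_pos_iff.mpr hx0
    have hxn : 0 < ‖x‖ ^ 2 := by positivity
    -- quadratic form of A on x is large
    have hqA : σ * ‖x‖ ^ 2 ≤ ⟪x, Matrix.toEuclideanLin A x⟫ := by
      rw [quad_eq A hA, norm_sq_eq hA.eigenvectorBasis, Finset.mul_sum]
      refine Finset.sum_le_sum fun i _ => ?_
      by_cases hi : i ∈ SA
      · exact mul_le_mul_of_nonneg_right (hSA i hi) (sq_nonneg _)
      · rw [inner_span_zero hA.eigenvectorBasis SA x hxV hi]; simp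
    -- quadratic form of B on x is nonpositive
    have hqB : ⟪x, Matrix.toEuclideanLin B x⟫ ≤ 0 := by
      rw [quad_eq B hB]
      refine Finset.sum_nonpos fun i _ => ?_
      by_cases hi : i ∈ SBᶜ
      · exact mul_nonpos_of_nonpos_of_nonneg (hSB i (Finset.mem_compl.mp hi)) (sq_nonneg _)
      · rw [inner_span_zero hB.eigenvectorBasis SBᶜ x hxW hi]; simp
    -- perturbation bound
    have hpert : |⟪x, Matrix.toEuclideanLin (B - A) x⟫| ≤ sNorm (B - A) * ‖x‖ ^ 2 :=
      abs_inner_le _ _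
    have hsplit : ⟪x, Matrix.toEuclideanLin B x⟫ =
        ⟪x, Matrix.toEuclideanLin A x⟫ + ⟪x, Matrix.toEuclideanLin (B - A) x⟫ := by
      rw [map_sub]
      simp [inner_sub_right]
    have hε : sNorm (B - A) ≤ σ / 8 := by linarith
    have hlow : -(σ / 8 * ‖x‖ ^ 2) ≤ ⟪x, Matrix.toEuclideanLin (B - A) x⟫ := by
      have h1 : -(sNorm (B - A) * ‖x‖ ^ 2) ≤ ⟪x, Matrix.toEuclideanLin (B - A) x⟫ :=
        neg_le_of_abs_le hpert
      have h2 : sNorm (B - A) * ‖x‖ ^ 2 ≤ σ / 8 * ‖x‖ ^ 2 :=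
        mul_le_mul_of_nonneg_right hε (le_of_lt hxn)
      linarith
    nlinarith [hqA, hqB, hlow, hsplit, hxn, mul_pos hσ hxn]
  have hdim := Submodule.finrank_add_finrank_le_of_disjoint hdisj
  rw [finrank_span_basis, finrank_span_basis, finrank_euclideanSpace_fin] at hdim
  have hc : SBᶜ.card = p - SB.card := by
    rw [Finset.card_compl, Fintype.card_fin]
  have hle : SB.card ≤ p := by
    simpa using Finset.card_le_card (Finset.subset_univ SB)
  omega

lemma core_neg (A B : Matrix (Fin p) (Fin p) ℝ) (hA : A.IsHermitian) (hB : B.IsHermitian)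
    (σ : ℝ) (hσ : 0 < σ) (hclose : 8 * sNorm (B - A) ≤ σ)
    (SA SB : Finset (Fin p))
    (hSA : ∀ i ∈ SA, hA.eigenvalues i ≤ -σ)
    (hSB : ∀ i ∉ SB, 0 ≤ hB.eigenvalues i) :
    SA.card ≤ SB.card := by
  set V := Submodule.span ℝ (hA.eigenvectorBasis '' (SA : Set (Fin p)))
  set W := Submodule.span ℝ (hB.eigenvectorBasis '' ((SBᶜ : Finset (Fin p)) : Set (Fin p)))
  have hdisj : Disjoint V W := by
    rw [Submodule.disjoint_def]
    intro x hxV hxW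
    by_contra hx0
    have hxpos : 0 < ‖x‖ := norm_pos_iff.mpr hx0
    have hxn : 0 < ‖x‖ ^ 2 := by positivity
    have hqA : ⟪x, Matrix.toEuclideanLin A x⟫ ≤ -σ * ‖x‖ ^ 2 := by
      rw [quad_eq A hA, norm_sq_eq hA.eigenvectorBasis, Finset.mul_sum]
      refine Finset.sum_le_sum fun i _ => ?_
      by_cases hi : i ∈ SA
      · exact mul_le_mul_of_nonneg_right (hSA i hi) (sq_nonneg _)
      · rw [inner_span_zero hA.eigenvectorBasis SA x hxV hi]; simp
    have hqB : 0 ≤ ⟪x, Matrix.toEuclideanLin B x⟫ := by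
      rw [quad_eq B hB]
      refine Finset.sum_nonneg fun i _ => ?_
      by_cases hi : i ∈ SBᶜ
      · exact mul_nonneg (hSB i (Finset.mem_compl.mp hi)) (sq_nonneg _)
      · rw [inner_span_zero hB.eigenvectorBasis SBᶜ x hxW hi]; simp
    have hpert : |⟪x, Matrix.toEuclideanLin (B - A) x⟫| ≤ sNorm (B - A) * ‖x‖ ^ 2 :=
      abs_inner_le _ _
    have hsplit : ⟪x, Matrix.toEuclideanLin B x⟫ =
        ⟪x, Matrix.toEuclideanLin A x⟫ + ⟪x, Matrix.toEuclideanLin (B - A) x⟫ := by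
      rw [map_sub]
      simp [inner_sub_right]
    have hε : sNorm (B - A) ≤ σ / 8 := by linarith
    have hupp : ⟪x, Matrix.toEuclideanLin (B - A) x⟫ ≤ σ / 8 * ‖x‖ ^ 2 := by
      have h1 := le_of_abs_le hpert
      have h2 : sNorm (B - A) * ‖x‖ ^ 2 ≤ σ / 8 * ‖x‖ ^ 2 :=
        mul_le_mul_of_nonneg_right hε (le_of_lt hxn)
      linarith
    nlinarith [hqA, hqB, hupp, hsplit, hxn, mul_pos hσ hxn]
  have hdim := Submodule.finrank_add_finrank_le_of_disjoint hdisj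
  rw [finrank_span_basis, finrank_span_basis, finrank_euclideanSpace_fin] at hdim
  have hc : SBᶜ.card = p - SB.card := by
    rw [Finset.card_compl, Fintype.card_fin]
  have hle : SB.card ≤ p := by
    simpa using Finset.card_le_card (Finset.subset_univ SB)
  omega

lemma rank_split (A : Matrix (Fin p) (Fin p) ℝ) (hA : A.IsHermitian) :
    A.rank = (Finset.univ.filter fun i => 0 < hA.eigenvalues i).card +
      (Finset.univ.filter fun i => hA.eigenvalues i < 0).card := by
  rw [hA.rank_eq_card_non_zero_eigs, Fintype.card_subtype]
  rw [← Finset.card_union_of_disjoint (by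
    simp only [Finset.disjoint_left, Finset.mem_filter]
    rintro i ⟨-, h1⟩ ⟨-, h2⟩
    linarith)]
  congr 1
  ext i
  simp only [Finset.mem_filter, Finset.mem_union, Finset.mem_univ, true_and]
  constructor
  · intro h; rcases h.lt_or_gt with h | h
    · exact Or.inr h
    · exact Or.inl h
  · rintro (h | h) <;> [exact ne_of_gt h; exact ne_of_lt h]

/-- rank and inertia correctness: if every nonzero singular value of the
symmetric matrix `L⋆` is at least `σ` (for a symmetric matrix, the singular values are the
absolute values of the eigenvalues), `rank(L) ≤ rank(L⋆)` and `8‖L − L⋆‖₂ ≤ σ`, then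
`rank(L) = rank(L⋆)` and `L` has the same inertia as `L⋆`. -/
theorem stmt_10 (p : ℕ) (Lstar L : Matrix (Fin p) (Fin p) ℝ)
    (hLstar : Lstar.IsHermitian) (hL : L.IsHermitian) (σ : ℝ) (hσ : 0 < σ)
    (hsv : ∀ i, hLstar.eigenvalues i ≠ 0 → σ ≤ |hLstar.eigenvalues i|)
    (hrank : L.rank ≤ Lstar.rank)
    (hclose : 8 * sNorm (L - Lstar) ≤ σ) :
    L.rank = Lstar.rank ∧
      (Finset.univ.filter fun i => 0 < hL.eigenvalues i).card =
        (Finset.univ.filter fun i => 0 < hLstar.eigenvalues i).card ∧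
      (Finset.univ.filter fun i => hL.eigenvalues i < 0).card =
        (Finset.univ.filter fun i => hLstar.eigenvalues i < 0).card := by
  have hpos : (Finset.univ.filter fun i => 0 < hLstar.eigenvalues i).card ≤
      (Finset.univ.filter fun i => 0 < hL.eigenvalues i).card := by
    refine core_pos Lstar L hLstar hL σ hσ hclose _ _ ?_ ?_
    · intro i hi
      have h1 : 0 < hLstar.eigenvalues i := (Finset.mem_filter.mp hi).2
      have := hsv i (ne_of_gt h1)
      rwa [abs_of_pos h1] at this
    · intro i hi
      simp only [Finset.mem_filter, Finset.mem_univ, true_and, not_lt] at hi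
      exact hi
  have hneg : (Finset.univ.filter fun i => hLstar.eigenvalues i < 0).card ≤
      (Finset.univ.filter fun i => hL.eigenvalues i < 0).card := by
    refine core_neg Lstar L hLstar hL σ hσ hclose _ _ ?_ ?_
    · intro i hi
      have h1 : hLstar.eigenvalues i < 0 := (Finset.mem_filter.mp hi).2
      have := hsv i (ne_of_lt h1)
      rw [abs_of_neg h1] at this
      linarith
    · intro i hi
      simp only [Finset.mem_filter, Finset.mem_univ, true_and, not_lt] at hi
      exact hi
  have hr1 := rank_split L hL
  have hr2 := rank_split Lstar hLstar
  omega

end
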